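/- Let α := lim_{n→∞} c_n/2^n (this limit exists). Then there is a constant K > 0 such that |c_{2m}/2^{2m} − α| ≤ K · 2^{−(3/2)m} for all m ≥ 4. -/

import Mathlib

/-- The Conway number (correlation) `C(A,B)` of two head/tail strings of length `n`,
encoded as functions `Fin n → Bool` (with `H = true`, `T = false`, and 0-indexed
positions): `C(A,B) = ∑_{i=1}^n δ_i 2^{n-i}` where `δ_i = 1` iff `a_{i+j} = b_{1+j}`
for all `j = 0,…,n-i`. -/
def conway {n : ℕ} (A B : Fin n → Bool) : ℕ :=
  ∑ i : Fin n,
    if (∀ j : Fin n, (i : ℕ) + (j : ℕ) < n → A (i + j) = B j) then 2 ^ (n - 1 - (i : ℕ)) else 0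

/-- `cstar m` is the number of head/tail strings of length `m` beginning with `HT`,
ending with `TH`, whose autocorrelation is `2^{m-1} + 1`. -/
def cstar (m : ℕ) : ℕ :=
  Fintype.card {A : Fin m → Bool //
    (∀ i : Fin m, (i : ℕ) = 0 → A i = true) ∧
    (∀ i : Fin m, (i : ℕ) = 1 → A i = false) ∧
    (∀ i : Fin m, (i : ℕ) = m - 2 → A i = false) ∧
    (∀ i : Fin m, (i : ℕ) = m - 1 → A i = true) ∧
    conway A A = 2 ^ (m - 1) + 1}

/-- `c n = 2 * cstar (n-1)`: by Csirik's characterization, the number of optimal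
strategies for Player I in the Penney-Ante game with strings of length `n`. -/
def c (n : ℕ) : ℕ := 2 * cstar (n - 1)

namespace Penney

def bdry {m : ℕ} (A : Fin m → Bool) : Prop :=
  (∀ i : Fin m, (i : ℕ) = 0 → A i = true) ∧
  (∀ i : Fin m, (i : ℕ) = 1 → A i = false) ∧
  (∀ i : Fin m, (i : ℕ) = m - 2 → A i = false) ∧
  (∀ i : Fin m, (i : ℕ) = m - 1 → A i = true)

def per {m : ℕ} (A : Fin m → Bool) (p : ℕ) : Prop :=
  ∀ i j : Fin m, (i : ℕ) = p + (j : ℕ) → A i = A j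

instance {m : ℕ} (A : Fin m → Bool) (p : ℕ) : Decidable (per A p) := by
  unfold per; infer_instance

instance {m : ℕ} (A : Fin m → Bool) : Decidable (bdry A) := by
  unfold bdry; infer_instance

lemma per_zero {m : ℕ} (A : Fin m → Bool) : per A 0 := by
  intro i j h
  congr 1
  exact Fin.ext (by simpa using h)

lemma per_add {m : ℕ} {A : Fin m → Bool} {p q : ℕ} (hp : per A p) (hq : per A q) :
    per A (p + q) := by
  intro i j h
  have hij : (i : ℕ) < m := i.isLt
  have hmid : q + (j : ℕ) < m := by omega
  have h1 := hp i ⟨q + j, hmid⟩ (by simp; omega)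
  have h2 := hq ⟨q + j, hmid⟩ j (by simp)
  rw [h1, h2]

lemma per_smul {m : ℕ} {A : Fin m → Bool} {q : ℕ} (hq : per A q) :
    ∀ k, 1 ≤ k → per A (k * q) := by
  intro k hk
  induction k with
  | zero => omega
  | succ n ih =>
    rcases Nat.eq_zero_or_pos n with h | h
    · subst h; simpa using hq
    · have := per_add (ih (by omega)) hq
      simpa [Nat.succ_mul] using this

def TTP (m : ℕ) (A : Fin m → Bool) : Prop := bdry A ∧ ∀ q ∈ Finset.Icc 1 (m - 2), ¬ per A q
instance {m : ℕ} (A : Fin m → Bool) : Decidable (TTP m A) := by unfold TTP; infer_instance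
def TT (m : ℕ) : Finset (Fin m → Bool) := Finset.univ.filter (TTP m)
def ggP (m h : ℕ) (A : Fin m → Bool) : Prop := bdry A ∧ ∀ q ∈ Finset.Icc (m - h) (m - 2), ¬ per A q
instance {m h : ℕ} (A : Fin m → Bool) : Decidable (ggP m h A) := by unfold ggP; infer_instance
def gg (m h : ℕ) : Finset (Fin m → Bool) := Finset.univ.filter (ggP m h)

lemma mem_TT {m : ℕ} {A : Fin m → Bool} :
    A ∈ TT m ↔ bdry A ∧ ∀ q : ℕ, 1 ≤ q → q ≤ m - 2 → ¬ per A q := by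
  simp [TT, TTP, Finset.mem_filter, Finset.mem_Icc, and_imp]

lemma mem_gg {m h : ℕ} {A : Fin m → Bool} :
    A ∈ gg m h ↔ bdry A ∧ ∀ q : ℕ, m - h ≤ q → q ≤ m - 2 → ¬ per A q := by
  simp [gg, ggP, Finset.mem_filter, Finset.mem_Icc, and_imp]

lemma TT_card_le (m : ℕ) : (TT m).card ≤ 2 ^ m := by
  have h1 : (TT m).card ≤ (Finset.univ : Finset (Fin m → Bool)).card :=
    Finset.card_le_card (Finset.filter_subset _ _)
  simpa [Finset.card_univ] using h1

/-- The `δ` condition in `conway` is exactly `per`. -/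
lemma delta_iff {m : ℕ} (A : Fin m → Bool) (i : Fin m) :
    (∀ j : Fin m, (i : ℕ) + (j : ℕ) < m → A (i + j) = A j) ↔ per A (i : ℕ) := by
  constructor
  · intro h I J hIJ
    have hlt : (i : ℕ) + (J : ℕ) < m := by have := I.isLt; omega
    have h1 := h J hlt
    have h2 : (i + J : Fin m) = I := by
      apply Fin.ext
      simp [Fin.val_add, Nat.mod_eq_of_lt hlt, hIJ]
    rwa [h2] at h1
  · intro h j hj
    have h2 : (i + j : Fin m) = ⟨(i : ℕ) + (j : ℕ), hj⟩ := by
      apply Fin.ext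
      simp [Fin.val_add, Nat.mod_eq_of_lt hj]
    rw [h2]
    exact h _ j rfl

lemma conway_self {m : ℕ} (hm : 3 ≤ m) (A : Fin m → Bool) (hb : bdry A) :
    conway A A = 2 ^ (m - 1) + 1 ↔ ∀ q : ℕ, 1 ≤ q → q ≤ m - 2 → ¬ per A q := by
  classical
  set f : Fin m → ℕ := fun i => if per A (i : ℕ) then 2 ^ (m - 1 - (i : ℕ)) else 0 with hf
  have hconv : conway A A = ∑ i : Fin m, f i := by
    unfold conway
    refine Finset.sum_congr rfl (fun i _ => ?_)
    simp only [hf, delta_iff A i]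
  set z : Fin m := ⟨0, by omega⟩ with hz
  set L : Fin m := ⟨m - 1, by omega⟩ with hL
  have hfz : f z = 2 ^ (m - 1) := by
    have : per A (z : ℕ) := by simpa [hz] using per_zero A
    simp only [hf]; rw [if_pos this]; simp [hz]
  have hfL : f L = 1 := by
    have hper : per A (L : ℕ) := by
      intro i j hij
      have hi := i.isLt
      have hj0 : (j : ℕ) = 0 := by simp [hL] at hij; omega
      have hi1 : (i : ℕ) = m - 1 := by simp [hL] at hij; omega
      rw [hb.2.2.2 i hi1, hb.1 j hj0]
    simp only [hf]; rw [if_pos hper]; simp [hL]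
  have hLz : L ≠ z := by
    simp only [hz, hL, ne_eq, Fin.mk.injEq]
    omega
  have hLmem : L ∈ (Finset.univ : Finset (Fin m)).erase z := by
    simp [Finset.mem_erase, hLz]
  have hsplit : ∑ i : Fin m, f i
      = f z + (f L + ∑ i ∈ ((Finset.univ.erase z).erase L), f i) := by
    rw [Finset.add_sum_erase _ f hLmem, Finset.add_sum_erase _ f (Finset.mem_univ z)]
  have hmem_iff : ∀ i : Fin m, i ∈ (Finset.univ.erase z).erase L ↔
      (1 ≤ (i : ℕ) ∧ (i : ℕ) ≤ m - 2) := by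
    intro i
    simp only [Finset.mem_erase, Finset.mem_univ, and_true, ne_eq]
    constructor
    · rintro ⟨h1, h2⟩
      have hi := i.isLt
      constructor
      · rcases Nat.eq_zero_or_pos (i : ℕ) with h | h
        · exact absurd (Fin.ext (by simp [hz, h])) h2
        · omega
      · by_contra hcon
        exact h1 (Fin.ext (by simp [hL]; omega))
    · rintro ⟨h1, h2⟩
      constructor
      · intro hcon; rw [hcon] at h2; simp [hL] at h2; omega
      · intro hcon; rw [hcon] at h1; simp [hz] at h1
  constructor
  · intro heq q hq1 hq2
    have hSum : f z + (f L + ∑ i ∈ ((Finset.univ.erase z).erase L), f i) = 2 ^ (m-1) + 1 := by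
      rw [← hsplit, ← hconv, heq]
    rw [hfz, hfL] at hSum
    have hS0 : ∑ i ∈ ((Finset.univ.erase z).erase L), f i = 0 := by omega
    have hQ : (⟨q, by omega⟩ : Fin m) ∈ (Finset.univ.erase z).erase L := by
      rw [hmem_iff]; constructor <;> simp <;> omega
    have := (Finset.sum_eq_zero_iff.mp hS0) _ hQ
    intro hper
    rw [hf] at this
    simp only at this
    rw [if_pos (by simpa using hper)] at this
    exact absurd this (by positivity)
  · intro hnp
    have hS0 : ∑ i ∈ ((Finset.univ.erase z).erase L), f i = 0 := by
      apply Finset.sum_eq_zero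
      intro i hi
      rw [hmem_iff] at hi
      simp only [hf]
      rw [if_neg (hnp _ hi.1 hi.2)]
    rw [hconv, hsplit, hS0, hfz, hfL]
  
lemma cstar_eq {m : ℕ} (hm : 3 ≤ m) : cstar m = (TT m).card := by
  classical
  rw [cstar, Fintype.card_subtype]
  congr 1
  apply Finset.filter_congr
  intro A _
  show _ ↔ TTP m A
  unfold TTP
  constructor
  · rintro ⟨h1, h2, h3, h4, h5⟩
    have hb : bdry A := ⟨h1, h2, h3, h4⟩
    refine ⟨hb, ?_⟩
    intro q hq
    simp only [Finset.mem_Icc] at hq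
    exact (conway_self hm A hb).mp h5 q hq.1 hq.2
  · rintro ⟨hb, h5⟩
    refine ⟨hb.1, hb.2.1, hb.2.2.1, hb.2.2.2, ?_⟩
    apply (conway_self hm A hb).mpr
    intro q h1 h2
    exact h5 q (Finset.mem_Icc.mpr ⟨h1, h2⟩)

end Penney
namespace Penney

lemma app_congr {m : ℕ} (A : Fin m → Bool) {x y : ℕ} (hx : x < m) (hy : y < m)
    (e : x = y) : A ⟨x, hx⟩ = A ⟨y, hy⟩ := by
  congr 1
  exact Fin.ext e

lemma bdry_iff {m : ℕ} (hm : 3 ≤ m) (A : Fin m → Bool) :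
    bdry A ↔ A ⟨0, by omega⟩ = true ∧ A ⟨1, by omega⟩ = false ∧
      A ⟨m-2, by omega⟩ = false ∧ A ⟨m-1, by omega⟩ = true := by
  constructor
  · rintro ⟨h1, h2, h3, h4⟩
    exact ⟨h1 _ rfl, h2 _ rfl, h3 _ rfl, h4 _ rfl⟩
  · rintro ⟨h1, h2, h3, h4⟩
    refine ⟨?_, ?_, ?_, ?_⟩ <;> intro i hi
    · rw [show i = ⟨0, by omega⟩ from Fin.ext hi]; exact h1
    · rw [show i = ⟨1, by omega⟩ from Fin.ext hi]; exact h2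
    · rw [show i = ⟨m-2, by omega⟩ from Fin.ext hi]; exact h3
    · rw [show i = ⟨m-1, by omega⟩ from Fin.ext hi]; exact h4

def del (m h : ℕ) (A : Fin (m+1) → Bool) : Fin m → Bool :=
  fun j => if (j : ℕ) < h then A ⟨j, by omega⟩ else A ⟨(j : ℕ) + 1, by omega⟩

def ins (m h : ℕ) (B : Fin m → Bool) (b : Bool) : Fin (m+1) → Bool :=
  fun i =>
    if hgt : h < (i : ℕ) then B ⟨(i : ℕ) - 1, by omega⟩
    else if hlt : (i : ℕ) < h then (if him : (i : ℕ) < m then B ⟨i, him⟩ else b)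
    else b

variable {m h : ℕ} {B : Fin m → Bool} {b : Bool} {A : Fin (m+1) → Bool}

lemma ins_lt {i : Fin (m+1)} (h1 : (i : ℕ) < h) (h2 : (i : ℕ) < m) :
    ins m h B b i = B ⟨i, h2⟩ := by
  unfold ins
  rw [dif_neg (by omega), dif_pos h1, dif_pos h2]

lemma ins_gt {i : Fin (m+1)} (h1 : h < (i : ℕ)) :
    ins m h B b i = B ⟨(i : ℕ) - 1, by omega⟩ := by
  unfold ins
  rw [dif_pos h1]

lemma ins_mid {i : Fin (m+1)} (h1 : (i : ℕ) = h) : ins m h B b i = b := by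
  unfold ins
  rw [dif_neg (by omega), dif_neg (by omega)]

lemma del_lt {j : Fin m} (h1 : (j : ℕ) < h) : del m h A j = A ⟨j, by omega⟩ := by
  unfold del; rw [if_pos h1]

lemma del_ge {j : Fin m} (h1 : ¬ (j : ℕ) < h) : del m h A j = A ⟨(j : ℕ) + 1, by omega⟩ := by
  unfold del; rw [if_neg h1]

lemma del_ins : del m h (ins m h B b) = B := by
  funext j
  by_cases hj : (j : ℕ) < h
  · rw [del_lt hj, ins_lt (i := ⟨(j:ℕ), by omega⟩) (by simpa using hj) (by simpa using j.isLt)]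
  · rw [del_ge hj, ins_gt (i := ⟨(j:ℕ)+1, by omega⟩) (by simp; omega)]
    rw [app_congr B _ j.isLt (by simp)]

lemma ins_del (hhm : h < m) :
    ins m h (del m h A) (A ⟨h, by omega⟩) = A := by
  funext i
  rcases lt_trichotomy ((i : ℕ) : ℕ) h with hlt | heq | hgt
  · rw [ins_lt hlt (by omega), del_lt (j := ⟨(i:ℕ), by omega⟩) (by simpa using hlt)]
  · rw [ins_mid heq]
    exact app_congr A _ i.isLt (by simp [heq])
  · rw [ins_gt hgt]
    have hb : (i : ℕ) - 1 < m := by have := i.isLt; omega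
    rw [del_ge (j := ⟨(i:ℕ)-1, hb⟩) (by simp; omega)]
    exact app_congr A _ i.isLt (by simp; omega)

lemma bdry_ins (hh : 2 ≤ h) (hm2 : h + 2 ≤ m) : bdry (ins m h B b) ↔ bdry B := by
  rw [bdry_iff (by omega), bdry_iff (m := m) (by omega)]
  have e1 : ins m h B b ⟨0, by omega⟩ = B ⟨0, by omega⟩ := by
    rw [ins_lt (by simp; omega) (by simp; omega)]
  have e2 : ins m h B b ⟨1, by omega⟩ = B ⟨1, by omega⟩ := by
    rw [ins_lt (by simp; omega) (by simp; omega)]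
  have e3 : ins m h B b ⟨(m+1)-2, by omega⟩ = B ⟨m-2, by omega⟩ := by
    rw [ins_gt (by simp; omega)]
    exact app_congr B _ (by omega) (by simp; omega)
  have e4 : ins m h B b ⟨(m+1)-1, by omega⟩ = B ⟨m-1, by omega⟩ := by
    rw [ins_gt (by simp; omega)]
    exact app_congr B _ (by omega) (by simp)
  rw [e1, e2, e3, e4]

lemma per_ins (hh : 2 ≤ h) (hm2 : 2 * h ≤ m) {q : ℕ}
    (hq1 : m + 1 - h ≤ q) (hq2 : q ≤ m - 1) :
    per (ins m h B b) q ↔ per B (q - 1) := by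
  constructor
  · intro hA I J hIJ
    have hI := I.isLt
    have hJlt : (J : ℕ) < h := by omega
    have hIge : h < (I : ℕ) + 1 := by omega
    have e1 : ins m h B b ⟨(J : ℕ), by omega⟩ = B J := by
      rw [ins_lt (by simpa using hJlt) (by simpa using J.isLt)]
    have e2 : ins m h B b ⟨(I : ℕ) + 1, by omega⟩ = B I := by
      rw [ins_gt (by simpa using hIge)]
      exact app_congr B _ I.isLt (by simp)
    have := hA ⟨(I : ℕ) + 1, by omega⟩ ⟨(J : ℕ), by omega⟩ (by simp; omega)
    rw [e1, e2] at this
    exact this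
  · intro hB I J hIJ
    have hI := I.isLt
    have hJlt : (J : ℕ) < h := by omega
    have hIgt : h < (I : ℕ) := by omega
    have hIb : (I : ℕ) - 1 < m := by omega
    have e1 : ins m h B b J = B ⟨(J : ℕ), by omega⟩ := ins_lt hJlt (by omega)
    have e2 : ins m h B b I = B ⟨(I : ℕ) - 1, hIb⟩ := ins_gt hIgt
    rw [e1, e2]
    exact hB ⟨(I : ℕ) - 1, hIb⟩ ⟨(J : ℕ), by omega⟩ (by simp; omega)

lemma ins_mem_gg (hh : 2 ≤ h) (hm2 : 2 * h ≤ m) :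
    ins m h B b ∈ gg (m+1) h ↔ B ∈ gg m h := by
  rw [mem_gg, mem_gg, bdry_ins hh (by omega)]
  constructor
  · rintro ⟨hb, hw⟩
    refine ⟨hb, ?_⟩
    intro q hql hqu hper
    have : per (ins m h B b) (q + 1) := by
      rw [per_ins hh hm2 (by omega) (by omega)]
      simpa using hper
    exact hw (q+1) (by omega) (by omega) this
  · rintro ⟨hb, hw⟩
    refine ⟨hb, ?_⟩
    intro q hql hqu hper
    rw [per_ins hh hm2 (by omega) (by omega)] at hper
    exact hw (q-1) (by omega) (by omega) hper

lemma gg_double (hh : 2 ≤ h) (hm2 : 2 * h ≤ m) :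
    (gg (m+1) h).card = 2 * (gg m h).card := by
  classical
  have hprod : ((gg m h) ×ˢ (Finset.univ : Finset Bool)).card = 2 * (gg m h).card := by
    rw [Finset.card_product]
    simp [Finset.card_univ, Nat.mul_comm]
  rw [← hprod]
  refine Finset.card_bij' (fun A (_ : A ∈ gg (m+1) h) => (del m h A, A ⟨h, by omega⟩))
    (fun Bb _ => ins m h Bb.1 Bb.2) ?_ ?_ ?_ ?_
  · intro A hA
    rw [Finset.mem_product]
    constructor
    · have hAe : A = ins m h (del m h A) (A ⟨h, by omega⟩) := (ins_del (by omega)).symm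
      rw [hAe] at hA
      exact (ins_mem_gg hh hm2).mp hA
    · exact Finset.mem_univ _
  · intro Bb hBb
    rw [Finset.mem_product] at hBb
    exact (ins_mem_gg hh hm2).mpr hBb.1
  · intro A hA
    exact ins_del (by omega)
  · intro Bb hBb
    have h1 : del m h (ins m h Bb.1 Bb.2) = Bb.1 := del_ins
    have h2 : ins m h Bb.1 Bb.2 ⟨h, by omega⟩ = Bb.2 := ins_mid rfl
    simp [h1, h2]

end Penney
namespace Penney

lemma TT_eq_gg {h : ℕ} (hh : 2 ≤ h) : TT (2*h) = gg (2*h) h := by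
  ext A
  rw [mem_TT, mem_gg]
  constructor
  · rintro ⟨hb, hw⟩
    exact ⟨hb, fun q hql hqu => hw q (by omega) (by omega)⟩
  · rintro ⟨hb, hw⟩
    refine ⟨hb, ?_⟩
    intro q hq1 hq2 hper
    by_cases hqh : 2*h - h ≤ q
    · exact hw q hqh hq2 hper
    · have hq0 : 0 < q := hq1
      obtain ⟨kk, rr, hrr, hdec⟩ : ∃ kk rr, rr < q ∧ h - 1 = q * kk + rr :=
        ⟨(h-1)/q, (h-1)%q, Nat.mod_lt _ hq0, (Nat.div_add_mod _ _).symm⟩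
      have hmul : (kk+1)*q = q * kk + q := by ring
      have hperk : per A ((kk+1)*q) := per_smul hper (kk+1) (by omega)
      exact hw ((kk+1)*q) (by omega) (by omega) hperk

def extendW (q0 : ℕ) {m h : ℕ} (y : Fin (h+1) → Bool) : Fin m → Bool :=
  fun i => if (i:ℕ) ≤ h then y ⟨min (i:ℕ) h, by omega⟩ else y ⟨min ((i:ℕ) - q0) h, by omega⟩

lemma extend_le {q0 m h : ℕ} {y : Fin (h+1) → Bool} {i : Fin m} (hi : (i:ℕ) ≤ h) :
    extendW q0 y i = y ⟨(i:ℕ), by omega⟩ := by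
  unfold extendW
  rw [if_pos hi]
  exact app_congr y _ (by omega) (by omega)

lemma extend_gt {q0 m h : ℕ} {y : Fin (h+1) → Bool} {i : Fin m} (hi : ¬ (i:ℕ) ≤ h)
    (hi2 : (i:ℕ) - q0 ≤ h) :
    extendW q0 y i = y ⟨(i:ℕ) - q0, by omega⟩ := by
  unfold extendW
  rw [if_neg hi]
  exact app_congr y _ (by omega) (by omega)

lemma extend_at_le {q0 m h : ℕ} (y : Fin (h+1) → Bool) (x : ℕ) (hx : x < m) (hle : x ≤ h) :
    extendW q0 y (⟨x, hx⟩ : Fin m) = y ⟨x, by omega⟩ := by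
  rw [extend_le (i := (⟨x, hx⟩ : Fin m)) hle]

lemma extend_at_gt {q0 m h : ℕ} (y : Fin (h+1) → Bool) (x : ℕ) (hx : x < m) (hgt : h < x)
    (h2 : x - q0 ≤ h) :
    extendW q0 y (⟨x, hx⟩ : Fin m) = y ⟨x - q0, by omega⟩ := by
  rw [extend_gt (i := (⟨x, hx⟩ : Fin m)) (by simp; omega) (by simp; omega)]

lemma gg_split {m h q0 : ℕ} (hh : 2 ≤ h) (hq0l : h ≤ q0) (hq0u : q0 ≤ h+1)
    (hm : m = q0 + h + 1) :
    (gg m h).card = (TT m).card + (TT (h+1)).card := by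
  classical
  set F := (gg m h).filter (fun A => per A q0) with hF
  have hsub : TT m ⊆ gg m h := by
    intro A hA
    rw [mem_TT] at hA
    rw [mem_gg]
    exact ⟨hA.1, fun q hql hqu => hA.2 q (by omega) hqu⟩
  have hunion : gg m h = TT m ∪ F := by
    ext A
    constructor
    · intro hA
      by_cases hp : per A q0
      · exact Finset.mem_union_right _ (Finset.mem_filter.mpr ⟨hA, hp⟩)
      · refine Finset.mem_union_left _ ?_
        rw [mem_TT]
        obtain ⟨hb, hw⟩ := mem_gg.mp hA
        refine ⟨hb, ?_⟩
        intro q hq1 hq2 hper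
        by_cases hcase1 : m - h ≤ q
        · exact hw q hcase1 hq2 hper
        · by_cases hcase2 : q = q0
          · exact hp (hcase2 ▸ hper)
          · by_cases hcase3 : q ≤ h - 1
            · have hq0' : 0 < q := hq1
              obtain ⟨kk, rr, hrr, hdec⟩ : ∃ kk rr, rr < q ∧ q0 = q * kk + rr :=
                ⟨q0/q, q0%q, Nat.mod_lt _ hq0', (Nat.div_add_mod _ _).symm⟩
              have hmul : (kk+1)*q = q * kk + q := by ring
              have hperk : per A ((kk+1)*q) := per_smul hper (kk+1) (by omega)
              exact hw ((kk+1)*q) (by omega) (by omega) hperk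
            · -- q = h and q0 = h+1
              have hqe : q = h := by omega
              have hq0e : q0 = h + 1 := by omega
              have hperk : per A (2*q) := per_smul hper 2 (by omega)
              exact hw (2*q) (by omega) (by omega) hperk
    · intro hA
      rcases Finset.mem_union.mp hA with h1 | h1
      · exact hsub h1
      · exact Finset.mem_of_mem_filter _ h1
  have hdisj : Disjoint (TT m) F := by
    rw [Finset.disjoint_left]
    intro A hA hAF
    have hper : per A q0 := (Finset.mem_filter.mp hAF).2
    exact (mem_TT.mp hA).2 q0 (by omega) (by omega) hper
  rw [hunion, Finset.card_union_of_disjoint hdisj]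
  congr 1
  -- F.card = (TT (h+1)).card
  refine Finset.card_bij' (fun A (_ : A ∈ F) => (fun j : Fin (h+1) => A ⟨(j:ℕ), by omega⟩))
    (fun y _ => extendW q0 y) ?_ ?_ ?_ ?_
  · -- forward membership
    intro A hA
    obtain ⟨hgg, hper⟩ := Finset.mem_filter.mp hA
    obtain ⟨hb, hw⟩ := mem_gg.mp hgg
    rw [mem_TT]
    constructor
    · rw [bdry_iff (by omega)]
      obtain ⟨b1, b2, b3, b4⟩ := (bdry_iff (by omega) A).mp hb
      refine ⟨b1, b2, ?_, ?_⟩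
      · show A ⟨(h+1)-2, by omega⟩ = false
        have := hper ⟨m-2, by omega⟩ ⟨(h+1)-2, by omega⟩ (by simp; omega)
        rw [← this]
        exact b3
      · show A ⟨(h+1)-1, by omega⟩ = true
        have := hper ⟨m-1, by omega⟩ ⟨(h+1)-1, by omega⟩ (by simp; omega)
        rw [← this]
        exact b4
    · intro p hp1 hp2 hpy
      have hperq : per A (q0 + p) := by
        intro I J hIJ
        have hI := I.isLt
        have hJ : (J:ℕ) + q0 + p < m := by omega
        have e1 : A I = A ⟨p + (J:ℕ), by omega⟩ :=
          hper I ⟨p + (J:ℕ), by omega⟩ (by simp; omega)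
        have e2 := hpy ⟨p + (J:ℕ), by omega⟩ ⟨(J:ℕ), by omega⟩ (by simp)
        simp only at e2
        rw [e1, e2]
      exact hw (q0 + p) (by omega) (by omega) hperq
  · -- backward membership
    intro y hy
    obtain ⟨hby, hwy⟩ := mem_TT.mp hy
    obtain ⟨c1, c2, c3, c4⟩ := (bdry_iff (by omega) y).mp hby
    have hpere : per (extendW q0 y : Fin m → Bool) q0 := by
      intro I J hIJ
      have hI := I.isLt
      have hJle : (J:ℕ) ≤ h := by omega
      have eJ : extendW q0 y J = y ⟨(J:ℕ), by omega⟩ := extend_le hJle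
      by_cases hIle : (I:ℕ) ≤ h
      · -- q0 + J ≤ h forces J = 0 and q0 = h
        have hJ0 : (J:ℕ) = 0 := by omega
        have hIh : (I:ℕ) = h := by omega
        have eI : extendW q0 y I = y ⟨(I:ℕ), by omega⟩ := extend_le hIle
        rw [eI, eJ]
        rw [app_congr y _ (by omega) (show (I:ℕ) = (h+1)-1 by omega), c4,
          app_congr y _ (by omega) (show (J:ℕ) = (0:ℕ) by omega)]
        exact c1.symm
      · have eI : extendW q0 y I = y ⟨(I:ℕ) - q0, by omega⟩ := extend_gt hIle (by omega)
        rw [eI, eJ]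
        exact app_congr y _ (by omega) (by omega)
    rw [hF, Finset.mem_filter]
    refine ⟨?_, hpere⟩
    rw [mem_gg]
    constructor
    · rw [bdry_iff (by omega)]
      have e0 : extendW q0 (m := m) y ⟨0, by omega⟩ = y ⟨0, by omega⟩ := by
        rw [extend_at_le (q0 := q0) (m := m) y 0 (by omega) (by omega)]
      have e1 : extendW q0 (m := m) y ⟨1, by omega⟩ = y ⟨1, by omega⟩ := by
        rw [extend_at_le (q0 := q0) (m := m) y 1 (by omega) (by omega)]
      have e2 : extendW q0 (m := m) y ⟨m-2, by omega⟩ = y ⟨(h+1)-2, by omega⟩ := by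
        rw [extend_at_gt (q0 := q0) (m := m) y (m-2) (by omega) (by omega) (by omega)]
        exact app_congr y _ (by omega) (by omega)
      have e3 : extendW q0 (m := m) y ⟨m-1, by omega⟩ = y ⟨(h+1)-1, by omega⟩ := by
        rw [extend_at_gt (q0 := q0) (m := m) y (m-1) (by omega) (by omega) (by omega)]
        exact app_congr y _ (by omega) (by omega)
      exact ⟨e0.trans c1, e1.trans c2, e2.trans c3, e3.trans c4⟩
    · intro q hql hqu hperA
      set p := q - q0 with hp
      have hp1 : 1 ≤ p := by omega
      have hp2 : p ≤ h - 1 := by omega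
      have hpy : per y p := by
        intro I' J' hI'J'
        have hI' := I'.isLt
        have eI : extendW q0 (m := m) y ⟨q0 + (I':ℕ), by omega⟩ = y ⟨(I':ℕ), by omega⟩ := by
          rw [extend_at_gt (q0 := q0) (m := m) y (q0 + (I':ℕ)) (by omega) (by omega) (by omega)]
          exact app_congr y _ (by omega) (by omega)
        have eJ : extendW q0 (m := m) y ⟨(J':ℕ), by omega⟩ = y ⟨(J':ℕ), by omega⟩ := by
          rw [extend_at_le (q0 := q0) (m := m) y (J':ℕ) (by omega) (by omega)]
        have h5 := hperA ⟨q0 + (I':ℕ), by omega⟩ ⟨(J':ℕ), by omega⟩ (by simp; omega)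
        exact (eI.symm.trans h5).trans eJ
      exact hwy p hp1 hp2 hpy
  · -- left inverse
    intro A hA
    have hper : per A q0 := (Finset.mem_filter.mp hA).2
    show extendW q0 (m := m) (fun j : Fin (h+1) => A ⟨(j:ℕ), by omega⟩) = A
    funext i
    by_cases hile : (i:ℕ) ≤ h
    · rw [extend_le hile]
    · have hI := i.isLt
      rw [extend_gt hile (by omega)]
      have h6 := hper i ⟨(i:ℕ) - q0, by omega⟩ (by simp; omega)
      exact h6.symm
  · -- right inverse
    intro y hy
    funext j
    have hj := j.isLt
    show extendW q0 (m := m) y ⟨(j:ℕ), by omega⟩ = y j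
    rw [extend_at_le (q0 := q0) (m := m) y (j:ℕ) (by omega) (by omega)]

end Penney
namespace Penney

lemma rec_odd {h : ℕ} (hh : 2 ≤ h) :
    (TT (2*h+1)).card + (TT (h+1)).card = 2 * (TT (2*h)).card := by
  have h1 := gg_split (m := 2*h+1) (q0 := h) hh le_rfl (by omega) (by omega)
  have h2 := gg_double (m := 2*h) (h := h) hh (by omega)
  have h3 : (gg (2*h) h).card = (TT (2*h)).card := by rw [← TT_eq_gg hh]
  omega

lemma rec_even {h : ℕ} (hh : 2 ≤ h) :
    (TT (2*h+2)).card = 2 * (TT (2*h+1)).card + (TT (h+1)).card := by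
  have h1 := gg_split (m := 2*h+2) (q0 := h+1) hh (by omega) le_rfl (by omega)
  have h2 := gg_double (m := 2*h+1) (h := h) hh (by omega)
  have e : 2*h+1+1 = 2*h+2 := by omega
  rw [e] at h2
  have h3 := gg_split (m := 2*h+1) (q0 := h) hh le_rfl (by omega) (by omega)
  omega

lemma stepA {j : ℕ} (hj : 2 ≤ j) :
    (TT (4*j+1)).card = 4 * (TT (4*j-1)).card + (TT (j+1)).card := by
  have h1 := rec_odd (h := 2*j) (by omega)
  have h2 := rec_even (h := 2*j-1) (by omega)
  have h3 := rec_odd (h := j) hj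
  have e1 : 2*(2*j)+1 = 4*j+1 := by ring
  have e2 : 2*(2*j) = 4*j := by ring
  have e3 : 2*(2*j-1)+2 = 4*j := by omega
  have e4 : 2*(2*j-1)+1 = 4*j-1 := by omega
  have e5 : 2*j-1+1 = 2*j := by omega
  rw [e1, e2] at h1
  rw [e3, e4, e5] at h2
  omega

lemma stepB {j : ℕ} (hj : 2 ≤ j) :
    (TT (4*j+3)).card + (TT (j+1)).card = 4 * (TT (4*j+1)).card := by
  have h1 := rec_odd (h := 2*j+1) (by omega)
  have h2 := rec_even (h := 2*j) (by omega)
  have h3 := rec_even (h := j) hj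
  have e1 : 2*(2*j+1)+1 = 4*j+3 := by ring
  have e2 : 2*j+1+1 = 2*j+2 := by ring
  have e3 : 2*(2*j+1) = 4*j+2 := by ring
  have e4 : 2*(2*j)+2 = 4*j+2 := by ring
  have e5 : 2*(2*j)+1 = 4*j+1 := by ring
  rw [e1, e2, e3] at h1
  rw [e4, e5] at h2
  omega

end Penney


open Penney

open Filter in
/-- If `α = lim c_n / 2^n`, then `|c_{2m}/2^{2m} - α| ≤ K · 2^{-(3/2)m}` for all
`m ≥ 4`, for some constant `K > 0`. -/
theorem dn_asymptotic_even (α : ℝ)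
    (hα : Tendsto (fun n : ℕ => (c n : ℝ) / 2 ^ n) atTop (nhds α)) :
    ∃ K : ℝ, 0 < K ∧ ∀ m : ℕ, 4 ≤ m →
      |(c (2 * m) : ℝ) / 2 ^ (2 * m) - α| ≤ K * (2 : ℝ) ^ (-(3 / 2 : ℝ) * (m : ℝ)) := by
  classical
  set s : ℕ → ℝ := fun k => (c (2*k) : ℝ) / 2 ^ (2*k) with hs_def
  have hs : Tendsto s atTop (nhds α) := by
    have h2 : Tendsto (fun k : ℕ => 2*k) atTop atTop :=
      tendsto_atTop_mono (fun k => by simp only [id_eq]; omega) tendsto_id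
    exact hα.comp h2
  set r : ℝ := (2:ℝ) ^ (-(3/2 : ℝ)) with hr_def
  have hr0 : 0 < r := Real.rpow_pos_of_pos (by norm_num) _
  have hr1 : r < 1 := Real.rpow_lt_one_of_one_lt_of_neg (by norm_num) (by norm_num)
  have hrm : ∀ k : ℕ, r ^ k = (2:ℝ) ^ (-(3/2 : ℝ) * (k:ℝ)) := by
    intro k
    rw [hr_def, ← Real.rpow_natCast ((2:ℝ) ^ (-(3/2 : ℝ))) k, ← Real.rpow_mul (by norm_num)]
  have hstep : ∀ k, 4 ≤ k → dist (s k) (s (k+1)) ≤ r ^ k := by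
    intro k hk
    have hc1 : (c (2*k) : ℝ) = 2 * ((TT (2*k-1)).card : ℝ) := by
      have h1 : c (2*k) = 2 * (TT (2*k-1)).card := by
        show 2 * cstar (2*k-1) = _
        rw [cstar_eq (by omega)]
      rw [h1]; push_cast; ring
    have hc2 : (c (2*k+2) : ℝ) = 2 * ((TT (2*k+1)).card : ℝ) := by
      have h1 : c (2*k+2) = 2 * (TT (2*k+1)).card := by
        show 2 * cstar (2*k+2-1) = _
        rw [show 2*k+2-1 = 2*k+1 by omega, cstar_eq (by omega)]
      rw [h1]; push_cast; ring
    set T1 : ℝ := ((TT (2*k-1)).card : ℝ) with hT1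
    set T2 : ℝ := ((TT (2*k+1)).card : ℝ) with hT2
    obtain ⟨j, hj⟩ : ∃ j, k = 2*j ∨ k = 2*j+1 := ⟨k/2, by omega⟩
    have hj2 : 2 ≤ j := by omega
    have hjk : 2*j ≤ k := by omega
    have habs : |4*T1 - T2| = ((TT (j+1)).card : ℝ) := by
      rcases hj with hje | hjo
      · have hA := stepA hj2
        rw [show 4*j+1 = 2*k+1 by omega, show 4*j-1 = 2*k-1 by omega] at hA
        have hAr : T2 = 4*T1 + ((TT (j+1)).card : ℝ) := by
          rw [hT1, hT2]; exact_mod_cast hA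
        rw [hAr, show 4*T1 - (4*T1 + ((TT (j+1)).card : ℝ)) = -(((TT (j+1)).card : ℝ)) by ring,
          abs_neg, abs_of_nonneg (by positivity)]
      · have hB := stepB hj2
        rw [show 4*j+3 = 2*k+1 by omega, show 4*j+1 = 2*k-1 by omega] at hB
        have hBr : T2 + ((TT (j+1)).card : ℝ) = 4*T1 := by
          rw [hT1, hT2]; exact_mod_cast hB
        rw [show 4*T1 - T2 = (T2 + ((TT (j+1)).card : ℝ)) - T2 by rw [hBr],
          show (T2 + ((TT (j+1)).card : ℝ)) - T2 = ((TT (j+1)).card : ℝ) by ring,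
          abs_of_nonneg (by positivity)]
    have hsk : s k - s (k+1) = (4*T1 - T2) / 2^(2*k+1) := by
      show (c (2*k) : ℝ) / 2^(2*k) - (c (2*(k+1)) : ℝ) / 2^(2*(k+1)) = _
      rw [show 2*(k+1) = 2*k+2 by ring, hc1, hc2]
      have hne1 : ((2:ℝ))^(2*k) ≠ 0 := by positivity
      have hne2 : ((2:ℝ))^(2*k+1) ≠ 0 := by positivity
      have hne3 : ((2:ℝ))^(2*k+2) ≠ 0 := by positivity
      field_simp
      ring
    have hfin : ((TT (j+1)).card : ℝ) / 2^(2*k+1) ≤ r ^ k := by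
      have hle : ((TT (j+1)).card : ℝ) ≤ 2^(j+1) := by
        exact_mod_cast TT_card_le (j+1)
      have h1 : ((TT (j+1)).card : ℝ) / 2^(2*k+1) ≤ (2:ℝ)^(j+1) / 2^(2*k+1) := by
        gcongr
      refine h1.trans ?_
      have e1 : ((2:ℝ))^(j+1) = (2:ℝ) ^ (((j:ℝ)+1)) := by
        rw [← Real.rpow_natCast 2 (j+1)]; push_cast; ring_nf
      have e2 : ((2:ℝ))^(2*k+1) = (2:ℝ) ^ ((2*(k:ℝ)+1)) := by
        rw [← Real.rpow_natCast 2 (2*k+1)]; push_cast; ring_nf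
      rw [e1, e2, ← Real.rpow_sub (by norm_num), hrm k]
      apply Real.rpow_le_rpow_of_exponent_le (by norm_num)
      have : 2*(j:ℝ) ≤ (k:ℝ) := by exact_mod_cast hjk
      linarith
    calc dist (s k) (s (k+1)) = |s k - s (k+1)| := Real.dist_eq _ _
    _ = |4*T1 - T2| / 2^(2*k+1) := by
        rw [hsk, abs_div, abs_of_pos (by positivity : (0:ℝ) < 2^(2*k+1))]
    _ = ((TT (j+1)).card : ℝ) / 2^(2*k+1) := by rw [habs]
    _ ≤ r ^ k := hfin
  set d : ℕ → ℝ := fun n => if 4 ≤ n then r^n else dist (s n) (s (n+1)) with hd_def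
  have hdd : ∀ n, dist (s n) (s (n+1)) ≤ d n := by
    intro n
    by_cases h4 : 4 ≤ n
    · rw [hd_def]; simp only [if_pos h4]; exact hstep n h4
    · rw [hd_def]; simp only [if_neg h4]; exact le_rfl
  have hsum : Summable d := by
    rw [← summable_nat_add_iff 4]
    have he : (fun n => d (n+4)) = fun n => r^n * r^4 := by
      funext n
      rw [hd_def]
      simp only [if_pos (by omega : 4 ≤ n+4)]
      rw [pow_add]
    rw [he]
    exact (summable_geometric_of_lt_one hr0.le hr1).mul_right _
  refine ⟨(1-r)⁻¹, inv_pos.mpr (by linarith), ?_⟩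
  intro m hm
  calc |(c (2*m) : ℝ) / 2 ^ (2*m) - α| = dist (s m) α := (Real.dist_eq _ _).symm
  _ ≤ ∑' i, d (m + i) := dist_le_tsum_of_dist_le_of_tendsto d hdd hsum hs m
  _ = ∑' i : ℕ, r^m * r^i := by
      apply tsum_congr
      intro i
      rw [hd_def]
      simp only [if_pos (by omega : 4 ≤ m + i)]
      rw [pow_add]
  _ = r^m * (1-r)⁻¹ := by rw [tsum_mul_left, tsum_geometric_of_lt_one hr0.le hr1]
  _ = (1-r)⁻¹ * r^m := by ring
  _ = (1-r)⁻¹ * (2:ℝ) ^ (-(3/2 : ℝ) * (m:ℝ)) := by rw [hrm m]
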